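/- Let ⪯ be any well-order of ℚ of order type ω, let ⊑ be the tree order of T(ℚ, ≤, ⪯), and let X ⊆ ℚ be order-isomorphic to (ℚ, ≤). Then for every positive integer n and every structure ([2n−1], ≤', ⪯') such that (≤', ⪯') is a compatible pair of linear orders of [2n−1], there exists an n-element subset S of X such that, writing S' for the closure of S under meets in T(ℚ, ≤, ⪯), the structure (S', ≤↾S', ⪯↾S') is isomorphic to ([2n−1], ≤', ⪯') via an isomorphism mapping S onto the set of leaves of the subtree (S', ⊑↾S'). -/

import Mathlib

universe u

/-- `c` is strictly `le`-between `a` and `b`. -/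
def strictlyBetween {α : Type u} (le : α → α → Prop) (a c b : α) : Prop :=
  (le a c ∧ le c b ∧ c ≠ a ∧ c ≠ b) ∨ (le b c ∧ le c a ∧ c ≠ a ∧ c ≠ b)

/-- The tree relation `⊑` of `T(V, ≤, ⪯)`: `a ⊑ b` iff `a ⪯ b` and there is no `c`
strictly `≤`-between `a` and `b` with `c ⪯ a` and `c ⪯ b`. -/
def treeRel {α : Type u} (le pre : α → α → Prop) (a b : α) : Prop :=
  pre a b ∧ ¬∃ c, strictlyBetween le a c b ∧ pre c a ∧ pre c b

/-- `s` is well-ordered by `r` (`r` is a reflexive `≤`-style relation):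
`r` is total on `s` and every nonempty subset of `s` has an `r`-least element. -/
def IsWellOrderedOn {α : Type u} (r : α → α → Prop) (s : Set α) : Prop :=
  (∀ a ∈ s, ∀ b ∈ s, r a b ∨ r b a) ∧
  ∀ t : Set α, t ⊆ s → t.Nonempty → ∃ m ∈ t, ∀ x ∈ t, r m x

/-- `r` is a (set-theoretic, rooted) tree order: a partial order with a minimum element
in which the set of predecessors of every element is well-ordered. -/
def IsTreeOrder {α : Type u} (r : α → α → Prop) : Prop :=
  IsPartialOrder α r ∧ (∃ root, ∀ a, r root a) ∧
  ∀ a, IsWellOrderedOn r {b | r b a}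

/-- `a` is a leaf of the tree order `r`: it has no strict successor. -/
def isLeaf {α : Type u} (r : α → α → Prop) (a : α) : Prop := ∀ b, r a b → b = a

/-- `b` is a son (immediate successor) of `a` in the tree order `r`. -/
def isSon {α : Type u} (r : α → α → Prop) (a b : α) : Prop :=
  r a b ∧ a ≠ b ∧ ∀ c, r a c → r c b → c = a ∨ c = b

/-- `a` has exactly two sons in the tree order `r`. -/
def hasTwoSons {α : Type u} (r : α → α → Prop) (a : α) : Prop :=
  ∃ b c, b ≠ c ∧ isSon r a b ∧ isSon r a c ∧ ∀ d, isSon r a d → d = b ∨ d = c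

/-- `(le, pre)` is a compatible pair of orders: `le` is a linear order, `pre` a preorder,
`T(V, le, pre)` is defined (i.e. `treeRel le pre` is a tree order), and every element
is either a leaf or has exactly two sons. -/
def CompatPair {α : Type u} (le pre : α → α → Prop) : Prop :=
  IsLinearOrder α le ∧ IsPreorder α pre ∧ IsTreeOrder (treeRel le pre) ∧
  ∀ a, isLeaf (treeRel le pre) a ∨ hasTwoSons (treeRel le pre) a

/-- `m` is the meet of `a` and `b` in the tree order `r`. -/
def isMeet {α : Type u} (r : α → α → Prop) (a b m : α) : Prop :=
  r m a ∧ r m b ∧ ∀ x, r x a → r x b → r x m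

/-- `C` is closed under the meet operation of the tree order `r`. -/
def MeetClosed {α : Type u} (r : α → α → Prop) (C : Set α) : Prop :=
  ∀ a ∈ C, ∀ b ∈ C, ∀ m, isMeet r a b m → m ∈ C


namespace Shapes


open Set

variable {α : Type u}

noncomputable def rnk (pre : α → α → Prop) (x : α) : ℕ :=
  {y | pre y x ∧ y ≠ x}.ncard

section Rank

variable {pre : α → α → Prop}

theorem pre_trans (hlin : IsLinearOrder α pre) {x y z : α} (h1 : pre x y) (h2 : pre y z) :
    pre x z := hlin.toIsPartialOrder.toIsPreorder.trans _ _ _ h1 h2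

theorem pre_antisymm (hlin : IsLinearOrder α pre) {x y : α} (h1 : pre x y) (h2 : pre y x) :
    x = y := hlin.toIsPartialOrder.toAntisymm.antisymm _ _ h1 h2

theorem pre_total (hlin : IsLinearOrder α pre) (x y : α) : pre x y ∨ pre y x :=
  hlin.toTotal.total x y

theorem pre_refl (hlin : IsLinearOrder α pre) (x : α) : pre x x :=
  hlin.toIsPartialOrder.toIsPreorder.refl x

theorem hfin' (hfin : ∀ x : α, {y | pre y x}.Finite) (x : α) :
    {y | pre y x ∧ y ≠ x}.Finite :=
  (hfin x).subset (fun y hy => hy.1)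

theorem rnk_lt_rnk (hlin : IsLinearOrder α pre) (hfin : ∀ x : α, {y | pre y x}.Finite)
    {x y : α} (hxy : pre x y) (hne : x ≠ y) : rnk pre x < rnk pre y := by
  have hsub : {z | pre z x ∧ z ≠ x} ⊂ {z | pre z y ∧ z ≠ y} := by
    constructor
    · rintro z ⟨h1, h2⟩
      refine ⟨pre_trans hlin h1 hxy, ?_⟩
      rintro rfl
      exact hne (pre_antisymm hlin hxy h1)
    · intro hsup
      have : x ∈ {z | pre z x ∧ z ≠ x} := hsup ⟨hxy, hne⟩
      exact this.2 rfl
  exact Set.ncard_lt_ncard hsub (hfin' hfin y)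

theorem pre_of_rnk_le (hlin : IsLinearOrder α pre) (hfin : ∀ x : α, {y | pre y x}.Finite)
    {x y : α} (h : rnk pre x ≤ rnk pre y) : pre x y := by
  rcases pre_total hlin x y with h1 | h1
  · exact h1
  · by_cases hne : y = x
    · subst hne; exact h1
    · exact absurd h (Nat.not_le.2 (rnk_lt_rnk hlin hfin h1 hne))

theorem rnk_le_rnk (hlin : IsLinearOrder α pre) (hfin : ∀ x : α, {y | pre y x}.Finite)
    {x y : α} (hxy : pre x y) : rnk pre x ≤ rnk pre y := by
  by_cases hne : x = y
  · subst hne; exact le_rfl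
  · exact (rnk_lt_rnk hlin hfin hxy hne).le

theorem pre_iff_rnk (hlin : IsLinearOrder α pre) (hfin : ∀ x : α, {y | pre y x}.Finite)
    (x y : α) : pre x y ↔ rnk pre x ≤ rnk pre y :=
  ⟨rnk_le_rnk hlin hfin, pre_of_rnk_le hlin hfin⟩

theorem rnk_injective (hlin : IsLinearOrder α pre) (hfin : ∀ x : α, {y | pre y x}.Finite) :
    Function.Injective (rnk pre) := by
  intro x y h
  exact pre_antisymm hlin (pre_of_rnk_le hlin hfin h.le) (pre_of_rnk_le hlin hfin h.ge)

theorem rnk_lt_iff (hlin : IsLinearOrder α pre) (hfin : ∀ x : α, {y | pre y x}.Finite)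
    (x y : α) : rnk pre x < rnk pre y ↔ (pre x y ∧ x ≠ y) := by
  constructor
  · intro h
    refine ⟨pre_of_rnk_le hlin hfin h.le, ?_⟩
    rintro rfl; exact lt_irrefl _ h
  · rintro ⟨h1, h2⟩; exact rnk_lt_rnk hlin hfin h1 h2

theorem finite_rnk_le (hlin : IsLinearOrder α pre) (hfin : ∀ x : α, {y | pre y x}.Finite)
    (R : ℕ) : {y | rnk pre y ≤ R}.Finite := by
  have h : {y | rnk pre y ≤ R} = (rnk pre) ⁻¹' (Set.Iic R) := rfl
  rw [h]
  exact Set.Finite.preimage ((rnk_injective hlin hfin).injOn) (Set.finite_Iic R)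

theorem exists_rnk_min {s : Set α} (hs : s.Nonempty) :
    ∃ w ∈ s, ∀ z ∈ s, rnk pre w ≤ rnk pre z := by
  have hne : (rnk pre '' s).Nonempty := hs.image _
  obtain ⟨w, hw, hweq⟩ := Nat.sInf_mem hne
  exact ⟨w, hw, fun z hz => hweq ▸ Nat.sInf_le ⟨z, hz, rfl⟩⟩

end Rank



/-- `c` lies in the closed interval spanned by `a` and `b` -/
def btw {α : Type u} (le : α → α → Prop) (a c b : α) : Prop :=
  (le a c ∧ le c b) ∨ (le b c ∧ le c a)

variable {α : Type u} {le pre : α → α → Prop}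

theorem le_trans' (hle : IsLinearOrder α le) {x y z : α} (h1 : le x y) (h2 : le y z) :
    le x z := hle.toIsPartialOrder.toIsPreorder.trans _ _ _ h1 h2

theorem le_antisymm' (hle : IsLinearOrder α le) {x y : α} (h1 : le x y) (h2 : le y x) :
    x = y := hle.toIsPartialOrder.toAntisymm.antisymm _ _ h1 h2

theorem le_total' (hle : IsLinearOrder α le) (x y : α) : le x y ∨ le y x :=
  hle.toTotal.total x y

theorem le_refl' (hle : IsLinearOrder α le) (x : α) : le x x :=
  hle.toIsPartialOrder.toIsPreorder.refl x

theorem sb_iff_btw (a c b : α) :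
    strictlyBetween le a c b ↔ btw le a c b ∧ c ≠ a ∧ c ≠ b := by
  unfold strictlyBetween btw; tauto

theorem btw_symm {a c b : α} (h : btw le a c b) : btw le b c a := h.symm

theorem btw_left (hle : IsLinearOrder α le) (a b : α) : btw le a a b := by
  rcases le_total' hle a b with h | h
  · exact Or.inl ⟨le_refl' hle a, h⟩
  · exact Or.inr ⟨h, le_refl' hle a⟩

theorem btw_right (hle : IsLinearOrder α le) (a b : α) : btw le a b b := by
  rcases le_total' hle a b with h | h
  · exact Or.inl ⟨h, le_refl' hle b⟩
  · exact Or.inr ⟨le_refl' hle b, h⟩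

theorem hull_trans (hle : IsLinearOrder α le) {a w b c : α}
    (hw : btw le a w b) (hc : btw le a c w) : btw le a c b := by
  rcases hw with ⟨h1, h2⟩ | ⟨h1, h2⟩ <;> rcases hc with ⟨h3, h4⟩ | ⟨h3, h4⟩
  · exact Or.inl ⟨h3, le_trans' hle h4 h2⟩
  · have hca : c = a := le_antisymm' hle h4 (le_trans' hle h1 h3)
    rw [hca]; exact btw_left hle a b
  · have hac : a = c := le_antisymm' hle h3 (le_trans' hle h4 h2)
    rw [← hac]; exact btw_left hle a b
  · exact Or.inr ⟨le_trans' hle h1 h3, h4⟩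

theorem hull_cover (hle : IsLinearOrder α le) {a b w m c : α}
    (hw : btw le a w b) (hc : btw le m c w) : btw le m c a ∨ btw le m c b := by
  rcases hw with ⟨h1, h2⟩ | ⟨h1, h2⟩ <;> rcases hc with ⟨h3, h4⟩ | ⟨h3, h4⟩
  · rcases le_total' hle c a with h | h
    · exact Or.inl (Or.inl ⟨h3, h⟩)
    · exact Or.inr (Or.inl ⟨h3, le_trans' hle h4 h2⟩)
  · exact Or.inl (Or.inr ⟨le_trans' hle h1 h3, h4⟩)
  · rcases le_total' hle c b with h | h
    · exact Or.inr (Or.inl ⟨h3, h⟩)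
    · exact Or.inl (Or.inl ⟨h3, le_trans' hle h4 h2⟩)
  · exact Or.inr (Or.inr ⟨le_trans' hle h1 h3, h4⟩)

theorem tr_iff_min (hle : IsLinearOrder α le) (hlin : IsLinearOrder α pre)
    (hfin : ∀ x : α, {y | pre y x}.Finite) (a b : α) :
    treeRel le pre a b ↔ ∀ c, btw le a c b → rnk pre a ≤ rnk pre c := by
  constructor
  · rintro ⟨hp, hblock⟩ c hc
    by_cases hca : c = a
    · subst hca; exact le_rfl
    by_cases hcb : c = b
    · subst hcb; exact rnk_le_rnk hlin hfin hp
    by_contra hlt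
    push_neg at hlt
    have hpc : pre c a := pre_of_rnk_le hlin hfin hlt.le
    exact hblock ⟨c, (sb_iff_btw a c b).2 ⟨hc, hca, hcb⟩, hpc, pre_trans hlin hpc hp⟩
  · intro h
    have hp : pre a b := pre_of_rnk_le hlin hfin (h b (btw_right hle a b))
    refine ⟨hp, ?_⟩
    rintro ⟨c, hsb, hca, _⟩
    obtain ⟨hbtw, hne, _⟩ := (sb_iff_btw a c b).1 hsb
    exact hne (rnk_injective hlin hfin (le_antisymm (rnk_le_rnk hlin hfin hca) (h c hbtw)))

theorem tr_refl (hle : IsLinearOrder α le) (hlin : IsLinearOrder α pre)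
    (hfin : ∀ x : α, {y | pre y x}.Finite) (a : α) : treeRel le pre a a := by
  rw [tr_iff_min hle hlin hfin]
  intro c hc
  rcases hc with ⟨h1, h2⟩ | ⟨h1, h2⟩ <;>
    exact le_of_eq (congrArg _ (le_antisymm' hle h1 h2))

theorem tr_rnk_le (hle : IsLinearOrder α le) (hlin : IsLinearOrder α pre)
    (hfin : ∀ x : α, {y | pre y x}.Finite) {a b : α} (h : treeRel le pre a b) :
    rnk pre a ≤ rnk pre b := rnk_le_rnk hlin hfin h.1

theorem tr_antisymm (hle : IsLinearOrder α le) (hlin : IsLinearOrder α pre)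
    (hfin : ∀ x : α, {y | pre y x}.Finite) {a b : α}
    (h1 : treeRel le pre a b) (h2 : treeRel le pre b a) : a = b :=
  pre_antisymm hlin h1.1 h2.1

theorem exists_hull_min (hle : IsLinearOrder α le) (a b : α) :
    ∃ w, btw le a w b ∧ ∀ c, btw le a c b → rnk pre w ≤ rnk pre c :=
  exists_rnk_min ⟨a, btw_left hle a b⟩

theorem hullmin_tr (hle : IsLinearOrder α le) (hlin : IsLinearOrder α pre)
    (hfin : ∀ x : α, {y | pre y x}.Finite) {a b w : α}
    (hw : btw le a w b) (hmin : ∀ c, btw le a c b → rnk pre w ≤ rnk pre c) :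
    treeRel le pre w a ∧ treeRel le pre w b := by
  constructor
  · rw [tr_iff_min hle hlin hfin]
    intro c hc
    exact hmin c (hull_trans hle hw (btw_symm hc))
  · rw [tr_iff_min hle hlin hfin]
    intro c hc
    exact hmin c (btw_symm (hull_trans hle (btw_symm hw) (btw_symm hc)))

theorem hullmin_isMeet (hle : IsLinearOrder α le) (hlin : IsLinearOrder α pre)
    (hfin : ∀ x : α, {y | pre y x}.Finite) {a b w : α}
    (hw : btw le a w b) (hmin : ∀ c, btw le a c b → rnk pre w ≤ rnk pre c) :
    isMeet (treeRel le pre) a b w := by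
  obtain ⟨h1, h2⟩ := hullmin_tr hle hlin hfin hw hmin
  refine ⟨h1, h2, ?_⟩
  intro m hma hmb
  rw [tr_iff_min hle hlin hfin]
  intro c hc
  rcases hull_cover hle hw hc with h | h
  · exact (tr_iff_min hle hlin hfin m a).1 hma c h
  · exact (tr_iff_min hle hlin hfin m b).1 hmb c h

theorem isMeet_unique (hle : IsLinearOrder α le) (hlin : IsLinearOrder α pre)
    (hfin : ∀ x : α, {y | pre y x}.Finite) {a b w w' : α}
    (h : isMeet (treeRel le pre) a b w) (h' : isMeet (treeRel le pre) a b w') : w = w' :=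
  tr_antisymm hle hlin hfin (h'.2.2 w h.1 h.2.1) (h.2.2 w' h'.1 h'.2.1)


section Shape

open Classical in
theorem exists_rnk_max {s : Set α} (hsf : s.Finite) (hs : s.Nonempty) :
    ∃ w ∈ s, ∀ z ∈ s, rnk pre z ≤ rnk pre w := by
  obtain ⟨w, hw, hmax⟩ := Set.Finite.exists_maximalFor (rnk pre) s hsf hs
  exact ⟨w, hw, fun z hz => by
    rcases Nat.le_total (rnk pre z) (rnk pre w) with h | h
    · exact h
    · exact hmax (j := z) hz h⟩

variable [Fintype α] {le pre : α → α → Prop}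

theorem rnk_lt_card (i : α) : rnk pre i < Fintype.card α := by
  have h1 : {y | pre y i ∧ y ≠ i} ⊂ Set.univ := by
    refine Set.ssubset_univ_iff.2 ?_
    intro h
    have : i ∈ {y | pre y i ∧ y ≠ i} := h ▸ Set.mem_univ i
    exact this.2 rfl
  have := Set.ncard_lt_ncard h1 Set.finite_univ
  rwa [Set.ncard_univ, Nat.card_eq_fintype_card] at this

theorem exists_rnk_eq (hlin : IsLinearOrder α pre) {k : ℕ} (hk : k < Fintype.card α) :
    ∃ i : α, rnk pre i = k := by
  have hfin : ∀ x : α, {y | pre y x}.Finite := fun x => Set.toFinite _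
  let f : α → Fin (Fintype.card α) := fun i => ⟨rnk pre i, rnk_lt_card i⟩
  have hinj : Function.Injective f := by
    intro x y hxy
    exact rnk_injective hlin hfin (congrArg Fin.val hxy)
  have hsurj : Function.Surjective f :=
    ((Fintype.bijective_iff_injective_and_card f).2 ⟨hinj, by simp⟩).2
  obtain ⟨i, hi⟩ := hsurj ⟨k, hk⟩
  exact ⟨i, congrArg Fin.val hi⟩

section Tree

theorem tr_trans' (htree : IsTreeOrder (treeRel le pre)) (h1 : treeRel le pre a b) (h2 : treeRel le pre b c) :
    treeRel le pre a c := htree.1.toIsPreorder.trans _ _ _ h1 h2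

theorem sons_opposite (hle : IsLinearOrder α le) (hlin : IsLinearOrder α pre)
    (htree : IsTreeOrder (treeRel le pre)) (hb : isSon (treeRel le pre) i b) (hc : isSon (treeRel le pre) i c)
    (hbc : b ≠ c) : btw le b i c := by
  have hfin : ∀ x : α, {y | pre y x}.Finite := fun x => Set.toFinite _
  obtain ⟨w, hw, hwmin⟩ := exists_hull_min (pre := pre) hle b c
  have hiw : treeRel le pre i w := by
    rw [tr_iff_min hle hlin hfin]
    intro d hd
    rcases hull_cover hle hw hd with h | h
    · exact (tr_iff_min hle hlin hfin i b).1 hb.1 d h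
    · exact (tr_iff_min hle hlin hfin i c).1 hc.1 d h
  obtain ⟨hwb, hwc⟩ := hullmin_tr hle hlin hfin hw hwmin
  rcases hb.2.2 w hiw hwb with h | h
  · subst h; exact hw
  · subst h
    rcases hc.2.2 w hiw hwc with h' | h'
    · exact absurd h'.symm (hb.2.1)
    · exact absurd h' hbc

/-- the rnk-maximal element strictly above `i` on the `le`-left of `i` is a leaf
    (stated for a general "side" predicate via `le j i`) -/
theorem side_max_leaf (hle : IsLinearOrder α le) (hlin : IsLinearOrder α pre)
    (htree : IsTreeOrder (treeRel le pre)) {i : α}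
    (A : Set α) (hA : A = {j | treeRel le pre i j ∧ j ≠ i ∧ le j i} ∨
                       A = {j | treeRel le pre i j ∧ j ≠ i ∧ le i j})
    (hAne : A.Nonempty) :
    ∃ p ∈ A, isLeaf (treeRel le pre) p := by
  have hfin : ∀ x : α, {y | pre y x}.Finite := fun x => Set.toFinite _
  obtain ⟨p, hp, hpmax⟩ := exists_rnk_max (pre := pre) (Set.toFinite A) hAne
  refine ⟨p, hp, ?_⟩
  intro d hpd
  by_contra hdp
  have hip : treeRel le pre i p ∧ p ≠ i ∧ (le p i ∨ le i p) := by
    rcases hA with rfl | rfl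
    · exact ⟨hp.1, hp.2.1, Or.inl hp.2.2⟩
    · exact ⟨hp.1, hp.2.1, Or.inr hp.2.2⟩
  have hid : treeRel le pre i d := tr_trans' htree hip.1 hpd
  have hrpd : rnk pre p < rnk pre d := rnk_lt_rnk hlin hfin hpd.1 (Ne.symm hdp)
  have hrip : rnk pre i < rnk pre p := rnk_lt_rnk hlin hfin hip.1.1 (Ne.symm hip.2.1)
  by_cases hdi : d = i
  · subst hdi; omega
  -- d on the same side as p?
  have hside : ¬ (d ∈ A) := by
    intro hdA
    exact absurd (hpmax d hdA) (by omega)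
  rcases hA with rfl | rfl
  · -- A is the left side; so ¬ le d i i.e. le i d
    have hld : le i d := by
      rcases le_total' hle d i with h | h
      · exact absurd ⟨hid, hdi, h⟩ hside
      · exact h
    -- p ≤ i ≤ d, so i is strictly between p and d; p ⊑ d forces rnk p ≤ rnk i
    have := (tr_iff_min hle hlin hfin p d).1 hpd i (Or.inl ⟨hp.2.2, hld⟩)
    omega
  · have hld : le d i := by
      rcases le_total' hle d i with h | h
      · exact h
      · exact absurd ⟨hid, hdi, h⟩ hside
    have := (tr_iff_min hle hlin hfin p d).1 hpd i (Or.inr ⟨hld, hp.2.2⟩)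
    omega

/-- every non-leaf is the hull-minimum between two leaves -/
theorem internal_hullmin_leaves (hle : IsLinearOrder α le) (hlin : IsLinearOrder α pre)
    (htree : IsTreeOrder (treeRel le pre))
    (hleaf2 : ∀ a, isLeaf (treeRel le pre) a ∨ hasTwoSons (treeRel le pre) a)
    {i : α} (hi : ¬ isLeaf (treeRel le pre) i) :
    ∃ p q, isLeaf (treeRel le pre) p ∧ isLeaf (treeRel le pre) q ∧
      btw le p i q ∧ p ≠ i ∧ q ≠ i ∧
      ∀ l, btw le p l q → rnk pre i ≤ rnk pre l := by
  have hfin : ∀ x : α, {y | pre y x}.Finite := fun x => Set.toFinite _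
  obtain ⟨b, c, hbc, hb, hc, -⟩ := (hleaf2 i).resolve_left hi
  have hbtw := sons_opposite hle hlin htree hb hc hbc
  -- WLOG b on the left : btw gives two cases, symmetric
  have main : ∀ b c : α, isSon (treeRel le pre) i b → isSon (treeRel le pre) i c →
      le b i → le i c →
      ∃ p q, isLeaf (treeRel le pre) p ∧ isLeaf (treeRel le pre) q ∧
      btw le p i q ∧ p ≠ i ∧ q ≠ i ∧
      ∀ l, btw le p l q → rnk pre i ≤ rnk pre l := by
    clear hbtw hb hc hbc b c
    intro b c hb hc hbi hic
    have hbne : b ≠ i := fun h => hb.2.1 h.symm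
    have hcne : c ≠ i := fun h => hc.2.1 h.symm
    obtain ⟨p, hpA, hpleaf⟩ := side_max_leaf hle hlin htree
      {j | treeRel le pre i j ∧ j ≠ i ∧ le j i} (Or.inl rfl) ⟨b, hb.1, hbne, hbi⟩
    obtain ⟨q, hqA, hqleaf⟩ := side_max_leaf hle hlin htree
      {j | treeRel le pre i j ∧ j ≠ i ∧ le i j} (Or.inr rfl) ⟨c, hc.1, hcne, hic⟩
    refine ⟨p, q, hpleaf, hqleaf, Or.inl ⟨hpA.2.2, hqA.2.2⟩, hpA.2.1, hqA.2.1, ?_⟩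
    intro l hl
    have hpl : le p l ∧ le l q := by
      rcases hl with h | ⟨h1, h2⟩
      · exact h
      · -- q ≤ l ≤ p ≤ i ≤ q forces everything equal
        have h3 : le l i := le_trans' hle h2 hpA.2.2
        have h4 : le q i := le_trans' hle h1 h3
        have h5 : q = i := le_antisymm' hle h4 hqA.2.2
        exact absurd h5 hqA.2.1
    rcases le_total' hle l i with h | h
    · exact (tr_iff_min hle hlin hfin i p).1 hpA.1 l (Or.inr ⟨hpl.1, h⟩)
    · exact (tr_iff_min hle hlin hfin i q).1 hqA.1 l (Or.inl ⟨h, hpl.2⟩)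
  rcases hbtw with ⟨h1, h2⟩ | ⟨h1, h2⟩
  · exact main b c hb hc h1 h2
  · exact main c b hc hb h1 h2

open Classical in
theorem leaf_count (hlin : IsLinearOrder α pre)
    (hleaf2 : ∀ a, isLeaf (treeRel le pre) a ∨ hasTwoSons (treeRel le pre) a)
    (hroot : ∃ root, ∀ a, treeRel le pre root a)
    (hwell : ∀ a : α, ∀ x ∈ {b | treeRel le pre b a}, ∀ y ∈ {b | treeRel le pre b a},
      treeRel le pre x y ∨ treeRel le pre y x)
    (hanti : ∀ x y : α, treeRel le pre x y → treeRel le pre y x → x = y) :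
    (Finset.univ.filter (fun i => isLeaf (treeRel le pre) i)).card * 2
      = Fintype.card α + 1 := by
  obtain ⟨root, hr⟩ := hroot
  -- parent uniqueness
  have huniq : ∀ i i' j : α, isSon (treeRel le pre) i j → isSon (treeRel le pre) i' j →
      i = i' := by
    intro i i' j hi hi'
    rcases hwell j i hi.1 i' hi'.1 with h | h
    · rcases hi.2.2 i' h hi'.1 with h' | h'
      · exact h'.symm
      · exact absurd h' hi'.2.1
    · rcases hi'.2.2 i h hi.1 with h' | h'
      · exact h'
      · exact absurd h' hi.2.1
  -- parent existence
  have hpar : ∀ j : α, j ≠ root → ∃ i, isSon (treeRel le pre) i j := by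
    intro j hj
    obtain ⟨p, hp, hpmax⟩ := exists_rnk_max (pre := pre)
      (Set.toFinite {i | treeRel le pre i j ∧ i ≠ j}) ⟨root, hr j, fun h => hj h.symm⟩
    refine ⟨p, hp.1, hp.2, ?_⟩
    intro c hpc hcj
    by_cases hc : c = j
    · exact Or.inr hc
    · left
      have h1 : rnk pre c ≤ rnk pre p := hpmax c ⟨hcj, hc⟩
      have h2 : rnk pre p ≤ rnk pre c := rnk_le_rnk hlin (fun x => Set.toFinite _) hpc.1
      exact (rnk_injective hlin (fun x => Set.toFinite _) (le_antisymm h2 h1)).symm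
  have hson_ne_root : ∀ i j : α, isSon (treeRel le pre) i j → j ≠ root := by
    intro i j hij h
    exact hij.2.1 (hanti i j hij.1 (by rw [h]; exact hr i))
  have hbu : Finset.univ.erase root
      = Finset.univ.biUnion (fun i => Finset.univ.filter (fun j => isSon (treeRel le pre) i j)) := by
    ext j
    simp only [Finset.mem_erase, Finset.mem_univ, and_true, Finset.mem_biUnion,
      Finset.mem_filter, true_and]
    constructor
    · intro h
      obtain ⟨i, hi⟩ := hpar j h
      exact ⟨i, hi⟩
    · rintro ⟨i, hi⟩
      exact hson_ne_root i j hi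
  have hdisj : (↑(Finset.univ : Finset α) : Set α).PairwiseDisjoint
      (fun i => Finset.univ.filter (fun j => isSon (treeRel le pre) i j)) := by
    intro i _ i' _ hii'
    simp only [Function.onFun]
    refine Finset.disjoint_left.2 ?_
    intro j hj hj'
    exact hii' (huniq i i' j (Finset.mem_filter.1 hj).2 (Finset.mem_filter.1 hj').2)
  have hcard : (Finset.univ.erase root).card
      = ∑ i : α, (Finset.univ.filter (fun j => isSon (treeRel le pre) i j)).card := by
    rw [hbu, Finset.card_biUnion hdisj]
  have hcount : ∀ i : α, (Finset.univ.filter (fun j => isSon (treeRel le pre) i j)).card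
      = if isLeaf (treeRel le pre) i then 0 else 2 := by
    intro i
    rcases hleaf2 i with hl | ⟨b, c, hbc, hb, hc, hall⟩
    · rw [if_pos hl]
      rw [Finset.card_eq_zero, Finset.filter_eq_empty_iff]
      intro j _ hj
      exact hj.2.1 (hl j hj.1).symm
    · have hnl : ¬ isLeaf (treeRel le pre) i := by
        intro hl
        exact hb.2.1 (hl b hb.1).symm
      rw [if_neg hnl]
      have : Finset.univ.filter (fun j => isSon (treeRel le pre) i j) = {b, c} := by
        ext j
        simp only [Finset.mem_filter, Finset.mem_univ, true_and, Finset.mem_insert,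
          Finset.mem_singleton]
        constructor
        · intro hj; exact hall j hj
        · rintro (rfl | rfl); exacts [hb, hc]
      rw [this, Finset.card_pair hbc]
  have hsplit := Finset.card_filter_add_card_filter_not
    (s := (Finset.univ : Finset α)) (p := fun i => isLeaf (treeRel le pre) i)
  have hsum : ∑ i : α, (Finset.univ.filter (fun j => isSon (treeRel le pre) i j)).card
      = 2 * (Finset.univ.filter (fun i => ¬ isLeaf (treeRel le pre) i)).card := by
    rw [Finset.sum_congr rfl (fun i _ => hcount i)]
    rw [Finset.sum_ite, Finset.sum_const, Finset.sum_const]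
    simp [mul_comm]
  have hroot_mem : root ∈ (Finset.univ : Finset α) := Finset.mem_univ root
  have herase : (Finset.univ.erase root).card = Fintype.card α - 1 := by
    rw [Finset.card_erase_of_mem hroot_mem, Finset.card_univ]
  have hpos : 1 ≤ Fintype.card α := Fintype.card_pos_iff.2 ⟨root⟩
  simp only [Finset.card_univ] at hsplit
  omega

end Tree

end Shape

section RatSide

variable {X : Set ℚ}

/-- density of a copy of ℚ -/
theorem X_dense (hX : Nonempty (↥X ≃o ℚ)) :
    ∀ x₁ ∈ X, ∀ x₂ ∈ X, x₁ < x₂ → {x | x ∈ X ∧ x₁ < x ∧ x < x₂}.Infinite := by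
  obtain ⟨f⟩ := hX
  intro x₁ h₁ x₂ h₂ h12
  have hq : f ⟨x₁, h₁⟩ < f ⟨x₂, h₂⟩ := by
    rw [OrderIso.lt_iff_lt]
    exact h12
  have hIoo : (Set.Ioo (f ⟨x₁, h₁⟩) (f ⟨x₂, h₂⟩)).Infinite :=
    Set.infinite_coe_iff.mp (Set.Ioo.infinite hq)
  have himg : ((fun q => (f.symm q : ℚ)) '' Set.Ioo (f ⟨x₁, h₁⟩) (f ⟨x₂, h₂⟩)).Infinite := by
    refine Set.Infinite.image ?_ hIoo
    intro a _ b _ hab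
    have : f.symm a = f.symm b := Subtype.ext hab
    simpa using congrArg f this
  refine himg.mono ?_
  rintro x ⟨q, hq1, rfl⟩
  refine ⟨(f.symm q).2, ?_, ?_⟩
  · have : f.symm (f ⟨x₁, h₁⟩) < f.symm q := by rw [OrderIso.lt_iff_lt]; exact hq1.1
    exact (by simpa using this : (⟨x₁, h₁⟩ : X) < f.symm q)
  · have : f.symm q < f.symm (f ⟨x₂, h₂⟩) := by rw [OrderIso.lt_iff_lt]; exact hq1.2
    exact (by simpa using this : f.symm q < (⟨x₂, h₂⟩ : X))

/-- a left-accumulation real point of `X` inside an `X`-interval -/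
theorem cluster
    (hXd : ∀ x₁ ∈ X, ∀ x₂ ∈ X, x₁ < x₂ → {x | x ∈ X ∧ x₁ < x ∧ x < x₂}.Infinite)
    {s t : ℚ} (hs : s ∈ X) (ht : t ∈ X) (hst : s < t) :
    ∃ L : ℝ, (s : ℝ) < L ∧ L ≤ (t : ℝ) ∧
      ∀ u : ℚ, (u : ℝ) < L → {x | x ∈ X ∧ u < x ∧ (x : ℝ) < L}.Infinite := by
  -- an increasing sequence in X ∩ (s,t)
  have hstep : ∀ x : ℚ, x ∈ X → s < x → x < t →
      ∃ y : ℚ, (y ∈ X ∧ s < y ∧ y < t) ∧ x < y := by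
    intro x hx hsx hxt
    obtain ⟨y, hy⟩ := (hXd x hx t ht hxt).nonempty
    exact ⟨y, ⟨hy.1, lt_trans hsx hy.2.1, hy.2.2⟩, hy.2.1⟩
  obtain ⟨a0, ha0⟩ := (hXd s hs t ht hst).nonempty
  choose F hF1 hF2 using hstep
  let a : ℕ → {x : ℚ // x ∈ X ∧ s < x ∧ x < t} := fun k =>
    Nat.rec ⟨a0, ha0.1, ha0.2.1, ha0.2.2⟩
      (fun _ p => ⟨F p.1 p.2.1 p.2.2.1 p.2.2.2, hF1 p.1 p.2.1 p.2.2.1 p.2.2.2⟩) k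
  have hmono : StrictMono (fun k => (a k).1) := by
    apply strictMono_nat_of_lt_succ
    intro k
    exact hF2 (a k).1 (a k).2.1 (a k).2.2.1 (a k).2.2.2
  have hbdd : BddAbove (Set.range fun k => ((a k).1 : ℝ)) := by
    refine ⟨(t : ℝ), ?_⟩
    rintro x ⟨k, rfl⟩
    show ((a k).1 : ℝ) ≤ (t : ℝ)
    exact_mod_cast (a k).2.2.2.le
  set L : ℝ := ⨆ k, ((a k).1 : ℝ) with hL
  have hle : ∀ k, ((a k).1 : ℝ) ≤ L := fun k => le_ciSup hbdd k
  have hlt : ∀ k, ((a k).1 : ℝ) < L := fun k =>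
    lt_of_lt_of_le (by exact_mod_cast hmono (Nat.lt_succ_self k)) (hle (k + 1))
  refine ⟨L, lt_of_le_of_lt (by exact_mod_cast (a 0).2.2.1.le) (hlt 0), ?_, ?_⟩
  · exact ciSup_le fun k => by exact_mod_cast (a k).2.2.2.le
  · intro u hu
    have hex : ∃ k, u < (a k).1 := by
      by_contra h
      push_neg at h
      have : L ≤ (u : ℝ) := ciSup_le fun k => by exact_mod_cast h k
      exact absurd hu (not_lt.2 this)
    obtain ⟨k0, hk0⟩ := hex
    apply Set.infinite_of_injective_forall_mem
      (f := fun j : ℕ => (a (k0 + j)).1)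
    · intro j1 j2 hj
      have : k0 + j1 = k0 + j2 := hmono.injective hj
      omega
    · intro j
      exact ⟨(a (k0 + j)).2.1, lt_of_lt_of_le hk0 (hmono.monotone (Nat.le_add_right k0 j)),
        hlt (k0 + j)⟩

variable {pre : ℚ → ℚ → Prop}

theorem pick_big (hlin : IsLinearOrder ℚ pre) (homega : ∀ x : ℚ, {y : ℚ | pre y x}.Finite)
    {W : Set ℚ} (hW : W.Infinite) (R : ℕ) : ∃ c ∈ W, R < rnk pre c := by
  obtain ⟨c, hc⟩ := (hW.diff (finite_rnk_le hlin homega R)).nonempty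
  exact ⟨c, hc.1, Nat.lt_of_not_le (fun h => hc.2 h)⟩

theorem key (hlin : IsLinearOrder ℚ pre) (homega : ∀ x : ℚ, {y : ℚ | pre y x}.Finite)
    (hXd : ∀ x₁ ∈ X, ∀ x₂ ∈ X, x₁ < x₂ → {x | x ∈ X ∧ x₁ < x ∧ x < x₂}.Infinite)
    {s t : ℚ} (hs : s ∈ X) (ht : t ∈ X) (hst : s < t) (R : ℕ) :
    ∃ c p q : ℚ, s ≤ p ∧ p < c ∧ c < q ∧ q ≤ t ∧ R < rnk pre c ∧
      (∀ w, p < w → w < c → rnk pre c < rnk pre w) ∧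
      (∀ w, c < w → w < q → rnk pre c < rnk pre w) ∧
      {x | x ∈ X ∧ p < x ∧ x < c}.Infinite ∧
      {x | x ∈ X ∧ c < x ∧ x < q}.Infinite := by
  classical
  obtain ⟨L, hsL, hLt, hLacc⟩ := cluster hXd hs ht hst
  -- a rational `u` beyond all low-rank points below L, with s < u < L
  have hFfin : {w : ℚ | rnk pre w ≤ R}.Finite := finite_rnk_le hlin homega R
  obtain ⟨u, hsu, huL, hu⟩ : ∃ u : ℚ, s < u ∧ (u : ℝ) < L ∧
      ∀ w : ℚ, u < w → (w : ℝ) < L → R < rnk pre w := by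
    have hFfin' : (insert s {w : ℚ | rnk pre w ≤ R ∧ (w : ℝ) < L}).Finite :=
      (hFfin.subset (fun w hw => hw.1)).insert s
    obtain ⟨m, hm, hmmax⟩ := hFfin'.exists_maximalFor (fun w : ℚ => w) _
      ⟨s, Set.mem_insert s _⟩
    have hmL : (m : ℝ) < L := by
      rcases hm with rfl | hm
      · exact hsL
      · exact hm.2
    obtain ⟨u, hu1, hu2⟩ := exists_rat_btwn hmL
    have hmu : m < u := by exact_mod_cast hu1
    have hmax : ∀ w ∈ insert s {w : ℚ | rnk pre w ≤ R ∧ (w : ℝ) < L}, w ≤ m := by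
      intro w hw
      rcases le_or_gt w m with h | h
      · exact h
      · exact absurd (lt_of_lt_of_le h (hmmax (j := w) hw h.le)) (lt_irrefl m)
    refine ⟨u, lt_of_le_of_lt (hmax s (Set.mem_insert s _)) hmu, hu2, ?_⟩
    intro w huw hwL
    by_contra h
    push_neg at h
    exact absurd (hmax w (Set.mem_insert_of_mem s ⟨h, hwL⟩)) (not_le.2 (lt_trans hmu huw))
  -- four points of X in (u, L)
  obtain ⟨t₁, ht₁⟩ := (hLacc u huL).nonempty
  obtain ⟨t₂, ht₂⟩ := (hLacc t₁ ht₁.2.2).nonempty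
  obtain ⟨t₃, ht₃⟩ := (hLacc t₂ ht₂.2.2).nonempty
  obtain ⟨t₄, ht₄⟩ := (hLacc t₃ ht₃.2.2).nonempty
  -- two left-accumulation points
  obtain ⟨L₁, hL₁a, hL₁b, hL₁acc⟩ := cluster hXd ht₁.1 ht₂.1 ht₂.2.1
  obtain ⟨L₂, hL₂a, hL₂b, hL₂acc⟩ := cluster hXd ht₃.1 ht₄.1 ht₄.2.1
  have hL₁₂ : L₁ < L₂ := lt_of_le_of_lt hL₁b (lt_trans (by exact_mod_cast ht₃.2.1) hL₂a)
  obtain ⟨w₀, hw₀1, hw₀2⟩ := exists_rat_btwn hL₁₂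
  have main : ∀ d : ℕ, ∀ p q : ℚ, t₁ ≤ p → q ≤ t₄ → (p : ℝ) < L₁ → L₂ ≤ (q : ℝ) →
      (∀ z, z ∈ Set.Ioo p q → rnk pre w₀ ≤ rnk pre z + d) →
      ∃ c p' q' : ℚ, p ≤ p' ∧ q' ≤ q ∧ p' < c ∧ c < q' ∧
        L₁ ≤ (c : ℝ) ∧ (c : ℝ) < L₂ ∧
        (∀ w, p' < w → w < c → rnk pre c < rnk pre w) ∧
        (∀ w, c < w → w < q' → rnk pre c < rnk pre w) ∧
        {x | x ∈ X ∧ p' < x ∧ x < c}.Infinite ∧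
        {x | x ∈ X ∧ c < x ∧ x < q'}.Infinite := by
    intro d
    induction d with
    | zero =>
      intro p q hp hq hpL hLq hz
      have hw₀pq : w₀ ∈ Set.Ioo p q := by
        constructor
        · exact_mod_cast lt_trans hpL hw₀1
        · exact_mod_cast lt_of_lt_of_le hw₀2 hLq
      refine ⟨w₀, p, q, le_refl p, le_refl q, hw₀pq.1, hw₀pq.2, hw₀1.le, hw₀2, ?_, ?_, ?_, ?_⟩
      · intro w h1 h2
        have hw : w ∈ Set.Ioo p q := ⟨h1, lt_trans h2 hw₀pq.2⟩
        have := hz w hw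
        have hne : w ≠ w₀ := ne_of_lt h2
        have : rnk pre w ≠ rnk pre w₀ := fun h => hne (rnk_injective hlin homega h)
        omega
      · intro w h1 h2
        have hw : w ∈ Set.Ioo p q := ⟨lt_trans hw₀pq.1 h1, h2⟩
        have := hz w hw
        have hne : w ≠ w₀ := ne_of_gt h1
        have : rnk pre w ≠ rnk pre w₀ := fun h => hne (rnk_injective hlin homega h)
        omega
      · refine (hL₁acc p hpL).mono ?_
        rintro x ⟨hx1, hx2, hx3⟩
        exact ⟨hx1, hx2, by exact_mod_cast lt_of_lt_of_le hx3 hw₀1.le⟩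
      · refine (hL₂acc w₀ hw₀2).mono ?_
        rintro x ⟨hx1, hx2, hx3⟩
        exact ⟨hx1, hx2, by exact_mod_cast lt_of_lt_of_le hx3 hLq⟩
    | succ d ih =>
      intro p q hp hq hpL hLq hz
      have hw₀pq : w₀ ∈ Set.Ioo p q := by
        constructor
        · exact_mod_cast lt_trans hpL hw₀1
        · exact_mod_cast lt_of_lt_of_le hw₀2 hLq
      obtain ⟨c, hc, hcmin⟩ := exists_rnk_min (pre := pre) ⟨w₀, hw₀pq⟩
      by_cases hcL₁ : (c : ℝ) < L₁
      · -- recurse on (c, q)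
        refine (ih c q (le_trans hp hc.1.le) hq hcL₁ hLq ?_).imp ?_
        · intro z hz'
          have hzpq : z ∈ Set.Ioo p q := ⟨lt_trans hc.1 hz'.1, hz'.2⟩
          have h1 := hz c hc
          have h2 := hcmin z hzpq
          have hne : z ≠ c := ne_of_gt hz'.1
          have : rnk pre z ≠ rnk pre c := fun h => hne (rnk_injective hlin homega h)
          omega
        · rintro c' ⟨p', q', h1, h2, h3⟩
          exact ⟨p', q', le_trans hc.1.le h1, h2, h3⟩
      · by_cases hcL₂ : (c : ℝ) < L₂
        · -- stop
          push_neg at hcL₁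
          refine ⟨c, p, q, le_refl p, le_refl q, hc.1, hc.2, hcL₁, hcL₂, ?_, ?_, ?_, ?_⟩
          · intro w h1 h2
            have h3 := hcmin w ⟨h1, lt_trans h2 hc.2⟩
            have hne : w ≠ c := ne_of_lt h2
            have : rnk pre w ≠ rnk pre c := fun h => hne (rnk_injective hlin homega h)
            omega
          · intro w h1 h2
            have h3 := hcmin w ⟨lt_trans hc.1 h1, h2⟩
            have hne : w ≠ c := ne_of_gt h1
            have : rnk pre w ≠ rnk pre c := fun h => hne (rnk_injective hlin homega h)
            omega
          · refine (hL₁acc p hpL).mono ?_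
            rintro x ⟨hx1, hx2, hx3⟩
            exact ⟨hx1, hx2, by exact_mod_cast lt_of_lt_of_le hx3 hcL₁⟩
          · refine (hL₂acc c hcL₂).mono ?_
            rintro x ⟨hx1, hx2, hx3⟩
            exact ⟨hx1, hx2, by exact_mod_cast lt_of_lt_of_le hx3 hLq⟩
        · -- recurse on (p, c)
          push_neg at hcL₂
          refine (ih p c hp (le_trans hc.2.le hq) hpL hcL₂ ?_).imp ?_
          · intro z hz'
            have hzpq : z ∈ Set.Ioo p q := ⟨hz'.1, lt_trans hz'.2 hc.2⟩
            have h1 := hz c hc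
            have h2 := hcmin z hzpq
            have hne : z ≠ c := ne_of_lt hz'.2
            have : rnk pre z ≠ rnk pre c := fun h => hne (rnk_injective hlin homega h)
            omega
          · rintro c' ⟨p', q', h1, h2, h3⟩
            exact ⟨p', q', h1, le_trans h2 hc.2.le, h3⟩
  obtain ⟨c, p', q', hpp', hqq', h3, h4, hcL₁, hcL₂, h5, h6, h7, h8⟩ :=
    main (rnk pre w₀) t₁ t₄ le_rfl le_rfl hL₁a hL₂b
      (fun z _ => le_add_self)
  have hup' : u < p' := lt_of_lt_of_le ht₁.2.1 hpp'
  have ht₄t : t₄ < t := by exact_mod_cast lt_of_lt_of_le ht₄.2.2 hLt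
  have hcL : (c : ℝ) < L := lt_trans (lt_of_lt_of_le hcL₂ hL₂b) ht₄.2.2
  refine ⟨c, p', q', ?_, h3, h4, ?_, ?_, h5, h6, h7, h8⟩
  · exact le_of_lt (lt_trans hsu hup')
  · exact le_of_lt (lt_of_le_of_lt hqq' ht₄t)
  · exact hu c (lt_trans hup' h3) hcL

end RatSide

section Build

variable (α : Type u) [Fintype α]

structure Ctx where
  pre : ℚ → ℚ → Prop
  hlin : IsLinearOrder ℚ pre
  homega : ∀ x : ℚ, {y : ℚ | pre y x}.Finite
  X : Set ℚ
  hXd : ∀ x₁ ∈ X, ∀ x₂ ∈ X, x₁ < x₂ → {x | x ∈ X ∧ x₁ < x ∧ x < x₂}.Infinite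
  le' : α → α → Prop
  pre' : α → α → Prop
  hle' : IsLinearOrder α le'
  hpre' : IsLinearOrder α pre'
  htree' : IsTreeOrder (treeRel le' pre')
  hleaf2 : ∀ a, isLeaf (treeRel le' pre') a ∨ hasTwoSons (treeRel le' pre') a
  g₀ : ℚ
  g₁ : ℚ
  hg₀ : g₀ ∈ X
  hg₁ : g₁ ∈ X
  hg : g₀ < g₁

variable {α}
variable (C : Ctx α)

namespace Ctx

def lt' (i j : α) : Prop := C.le' i j ∧ i ≠ j

noncomputable def R' (i : α) : ℕ := rnk C.pre' i

noncomputable def Rq (x : ℚ) : ℕ := rnk C.pre x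

def leaf' (i : α) : Prop := isLeaf (treeRel C.le' C.pre') i

def proc (k : ℕ) (i : α) : Prop := C.R' i < k

def sameGap (k : ℕ) (j j' : α) : Prop := ∀ i, C.proc k i → (C.lt' i j ↔ C.lt' i j')

def gapFirst (k : ℕ) (j : α) : Prop :=
  ∀ j', ¬ C.proc k j' → j' ≠ j → C.sameGap k j j' → C.R' j < C.R' j'

def isLB (k : ℕ) (j i : α) : Prop :=
  C.proc k i ∧ C.lt' i j ∧ ∀ i', C.proc k i' → C.lt' i' j → C.le' i' i

def isUB (k : ℕ) (j i : α) : Prop :=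
  C.proc k i ∧ C.lt' j i ∧ ∀ i', C.proc k i' → C.lt' j i' → C.le' i i'

def InZone (k : ℕ) (c : α → ℚ) (j : α) (q : ℚ) : Prop :=
  C.g₀ < q ∧ q < C.g₁ ∧
  (∀ i, C.proc k i → (C.lt' i j → c i < q) ∧ (C.lt' j i → q < c i)) ∧
  (∀ i, C.isLB k j i → ∀ w, c i < w → w < q → C.Rq (c i) < C.Rq w) ∧
  (∀ i, C.isUB k j i → ∀ w, q < w → w < c i → C.Rq (c i) < C.Rq w)

structure Inv (k : ℕ) (c : α → ℚ) : Prop where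
  pos : ∀ i j, C.proc k i → C.proc k j → (C.lt' i j ↔ c i < c j)
  rk : ∀ i j, C.proc k i → C.proc k j → C.R' i < C.R' j → C.Rq (c i) < C.Rq (c j)
  lf : ∀ i, C.proc k i → C.leaf' i → c i ∈ C.X
  bd : ∀ i, C.proc k i → C.g₀ < c i ∧ c i < C.g₁
  cln : ∀ i j, C.proc k i → C.proc k j → c i < c j →
    (∀ l, C.proc k l → ¬(c i < c l ∧ c l < c j)) →
    ∀ w, c i < w → w < c j → min (C.Rq (c i)) (C.Rq (c j)) < C.Rq w
  zn : ∀ j, ¬ C.proc k j → C.gapFirst k j → {x | x ∈ C.X ∧ C.InZone k c j x}.Infinite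

-- basic order facts
theorem hfin' : ∀ i : α, {j | C.pre' j i}.Finite := fun _ => Set.toFinite _

theorem lt'_trans {i j l : α} (h1 : C.lt' i j) (h2 : C.lt' j l) : C.lt' i l := by
  refine ⟨le_trans' C.hle' h1.1 h2.1, ?_⟩
  rintro rfl
  exact h2.2 (le_antisymm' C.hle' h2.1 h1.1)

theorem lt'_asymm {i j : α} (h1 : C.lt' i j) : ¬ C.lt' j i := by
  rintro ⟨h2, -⟩
  exact h1.2 (le_antisymm' C.hle' h1.1 h2)

theorem lt'_total {i j : α} (h : i ≠ j) : C.lt' i j ∨ C.lt' j i := by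
  rcases le_total' C.hle' i j with h1 | h1
  · exact Or.inl ⟨h1, h⟩
  · exact Or.inr ⟨h1, h.symm⟩

theorem lt'_irrefl (i : α) : ¬ C.lt' i i := fun h => h.2 rfl

theorem R'_inj : Function.Injective C.R' :=
  rnk_injective C.hpre' C.hfin'

theorem R'_lt_iff (i j : α) : C.R' i < C.R' j ↔ (C.pre' i j ∧ i ≠ j) :=
  rnk_lt_iff C.hpre' C.hfin' i j

theorem Rq_inj : Function.Injective C.Rq :=
  rnk_injective C.hlin C.homega

theorem proc_mono {k : ℕ} {i : α} (h : C.proc k i) : C.proc (k + 1) i :=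
  Nat.lt_succ_of_lt h

theorem proc_succ_iff {k : ℕ} {js i : α} (hjs : C.R' js = k) :
    C.proc (k + 1) i ↔ (C.proc k i ∨ i = js) := by
  unfold proc
  constructor
  · intro h
    rcases Nat.lt_succ_iff_lt_or_eq.1 h with h' | h'
    · exact Or.inl h'
    · exact Or.inr (C.R'_inj (h'.trans hjs.symm))
  · rintro (h | rfl)
    · exact Nat.lt_succ_of_lt h
    · rw [hjs]; exact Nat.lt_succ_self k

theorem zone_convex {k : ℕ} {c : α → ℚ} {j : α} {q₁ q q₂ : ℚ}
    (h1 : q₁ ≤ q) (h2 : q ≤ q₂)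
    (hz1 : C.InZone k c j q₁) (hz2 : C.InZone k c j q₂) : C.InZone k c j q := by
  obtain ⟨a1, b1, p1, l1, u1⟩ := hz1
  obtain ⟨a2, b2, p2, l2, u2⟩ := hz2
  refine ⟨lt_of_lt_of_le a1 h1, lt_of_le_of_lt h2 b2, ?_, ?_, ?_⟩
  · intro i hi
    exact ⟨fun h => lt_of_lt_of_le ((p1 i hi).1 h) h1,
      fun h => lt_of_le_of_lt h2 ((p2 i hi).2 h)⟩
  · intro i hi w hw1 hw2
    exact l2 i hi w hw1 (lt_of_lt_of_le hw2 h2)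
  · intro i hi w hw1 hw2
    exact u1 i hi w (lt_of_le_of_lt h1 hw1) hw2

/-- from failure of sameGap, get a processed separator -/
theorem sep_of_not_sameGap {k : ℕ} {j js : α} (hj : ¬ C.proc k j) (hjs : ¬ C.proc k js)
    (hns : ¬ C.sameGap k j js) :
    ∃ i, C.proc k i ∧ ((C.lt' i j ∧ C.lt' js i) ∨ (C.lt' j i ∧ C.lt' i js)) := by
  unfold sameGap at hns
  push_neg at hns
  obtain ⟨i, hi, hne⟩ := hns
  have hij : i ≠ j := fun h => hj (h ▸ hi)
  have hijs : i ≠ js := fun h => hjs (h ▸ hi)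
  rcases hne with ⟨h1, h2⟩ | ⟨h1, h2⟩
  · exact ⟨i, hi, Or.inl ⟨h1, (C.lt'_total hijs.symm).resolve_right h2⟩⟩
  · exact ⟨i, hi, Or.inr ⟨(C.lt'_total hij).resolve_left h1, h2⟩⟩

end Ctx

end Build

namespace Ctx

variable {α : Type u} [Fintype α] [DecidableEq α] (C : Ctx α)

theorem not_proc_self {k : ℕ} {js : α} (hjs : C.R' js = k) : ¬ C.proc k js := by
  unfold proc; omega

theorem gapFirst_self {k : ℕ} {js : α} (hjs : C.R' js = k) : C.gapFirst k js := by
  intro j' hj' hne _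
  have h1 : k ≤ C.R' j' := Nat.le_of_not_lt hj'
  have h2 : C.R' j' ≠ k := fun h => hne (C.R'_inj (h.trans hjs.symm))
  omega

theorem gapFirst_of_succ {k : ℕ} {js j : α} (hjs : C.R' js = k)
    (hj : ¬ C.proc (k + 1) j) (hgf : C.gapFirst (k + 1) j)
    (hns : ¬ C.sameGap k j js) : C.gapFirst k j := by
  intro j'' hj'' hne hsg
  by_cases hej : j'' = js
  · subst hej
    exact absurd hsg hns
  have hj''1 : ¬ C.proc (k + 1) j'' := by
    intro h
    rcases (C.proc_succ_iff hjs).1 h with h' | h'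
    · exact hj'' h'
    · exact hej h'
  refine hgf j'' hj''1 hne ?_
  intro i hi
  rcases (C.proc_succ_iff hjs).1 hi with h' | rfl
  · exact hsg i h'
  -- i = js : both sides of the separator
  have hjk : ¬ C.proc k j := fun h => hj (C.proc_mono h)
  obtain ⟨i₀, hi₀, hsep⟩ := C.sep_of_not_sameGap hjk (C.not_proc_self hjs) hns
  rcases hsep with ⟨h1, h2⟩ | ⟨h1, h2⟩
  · -- i₀ < j and js < i₀ : js < j and js < j''
    have l1 : C.lt' i j := C.lt'_trans h2 h1
    have l2 : C.lt' i j'' := C.lt'_trans h2 ((hsg i₀ hi₀).1 h1)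
    exact iff_of_true l1 l2
  · -- j < i₀ < js : ¬ js < j and ¬ js < j''
    have l1 : ¬ C.lt' i j := by
      intro h
      exact C.lt'_asymm (C.lt'_trans h h1) h2
    have l2 : ¬ C.lt' i j'' := by
      intro h
      have h3 : ¬ C.lt' i₀ j'' := fun hx => (hsg i₀ hi₀).2 hx |> C.lt'_asymm h1
      have h4 : C.lt' j'' i₀ := by
        rcases C.lt'_total (show j'' ≠ i₀ from fun he => hj'' (he ▸ hi₀)) with hx | hx
        · exact hx
        · exact absurd hx h3
      exact C.lt'_asymm (C.lt'_trans h h4) h2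
    exact iff_of_false l1 l2

theorem leaf_no_future {k : ℕ} {js j : α} (hjs : C.R' js = k)
    (hj : ¬ C.proc (k + 1) j) (hne : j ≠ js) (hsg : C.sameGap k j js) :
    ¬ C.leaf' js := by
  intro hlf
  have htr : treeRel C.le' C.pre' js j := by
    rw [tr_iff_min C.hle' C.hpre' C.hfin' js j]
    intro l hl
    show rnk C.pre' js ≤ rnk C.pre' l
    by_cases hljs : l = js
    · subst hljs; exact le_rfl
    have hjs' : rnk C.pre' js = k := hjs
    by_cases hlj : l = j
    · subst hlj
      have h5 : ¬ (rnk C.pre' l < k + 1) := hj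
      omega
    -- l is strictly between js and j
    by_cases hlp : C.proc k l
    · exfalso
      rcases hl with ⟨h1, h2⟩ | ⟨h1, h2⟩
      · -- js ≤ l ≤ j
        have hx : C.lt' l j := ⟨h2, hlj⟩
        have hy : C.lt' l js := (hsg l hlp).1 hx
        exact hy.2 (le_antisymm' C.hle' hy.1 h1)
      · -- j ≤ l ≤ js
        have hx : C.lt' l js := ⟨h2, hljs⟩
        have hy : C.lt' l j := (hsg l hlp).2 hx
        exact hy.2 (le_antisymm' C.hle' hy.1 h1)
    · have h6 : ¬ (rnk C.pre' l < k) := hlp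
      omega
  exact hne (hlf j htr)

theorem cval {k : ℕ} {c : α → ℚ} {js : α} (hjs : C.R' js = k) {cs : ℚ} {i : α}
    (hi : C.proc k i) : Function.update c js cs i = c i := by
  refine Function.update_of_ne ?_ _ _
  rintro rfl
  exact C.not_proc_self hjs hi

/-- zone preservation for gaps not containing the new point -/
theorem zone_untouched {k : ℕ} {c : α → ℚ} {js j : α} (hjs : C.R' js = k)
    {cs x : ℚ} (hcsZ : C.InZone k c js cs)
    (hj : ¬ C.proc (k + 1) j) (hns : ¬ C.sameGap k j js)
    (hx : C.InZone k c j x) :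
    C.InZone (k + 1) (Function.update c js cs) j x := by
  have hjk : ¬ C.proc k j := fun h => hj (C.proc_mono h)
  obtain ⟨i₀, hi₀, hsep⟩ := C.sep_of_not_sameGap hjk (C.not_proc_self hjs) hns
  obtain ⟨a1, b1, p1, l1, u1⟩ := hx
  refine ⟨a1, b1, ?_, ?_, ?_⟩
  · intro i hi
    rcases (C.proc_succ_iff hjs).1 hi with h' | rfl
    · rw [C.cval hjs h']
      exact p1 i h'
    · rw [Function.update_self]
      rcases hsep with ⟨h1, h2⟩ | ⟨h1, h2⟩
      · constructor
        · intro h3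
          exact lt_trans ((hcsZ.2.2.1 i₀ hi₀).2 h2) ((p1 i₀ hi₀).1 h1)
        · intro h3
          exact absurd (C.lt'_trans h3 (C.lt'_trans h2 h1)) (C.lt'_irrefl j)
      · constructor
        · intro h3
          exact absurd (C.lt'_trans h3 (C.lt'_trans h1 h2)) (C.lt'_irrefl i)
        · intro h3
          exact lt_trans ((p1 i₀ hi₀).2 h1) ((hcsZ.2.2.1 i₀ hi₀).1 h2)
  · intro i hi w hw1 hw2
    have hine : i ≠ js := by
      intro he
      rw [he] at hi
      rcases hsep with ⟨h1, h2⟩ | ⟨h1, h2⟩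
      · exact h2.2 (le_antisymm' C.hle' h2.1 (hi.2.2 i₀ (C.proc_mono hi₀) h1))
      · exact C.lt'_asymm (C.lt'_trans hi.2.1 h1) h2
    have hio : C.proc k i := ((C.proc_succ_iff hjs).1 hi.1).resolve_right hine
    rw [C.cval hjs hio] at hw1 ⊢
    exact l1 i ⟨hio, hi.2.1, fun i' hi' hlt => hi.2.2 i' (C.proc_mono hi') hlt⟩ w hw1 hw2
  · intro i hi w hw1 hw2
    have hine : i ≠ js := by
      intro he
      rw [he] at hi
      rcases hsep with ⟨h1, h2⟩ | ⟨h1, h2⟩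
      · exact C.lt'_asymm (C.lt'_trans h1 hi.2.1) h2
      · exact h2.2 (le_antisymm' C.hle' h2.1 (hi.2.2 i₀ (C.proc_mono hi₀) h1))
    have hio : C.proc k i := ((C.proc_succ_iff hjs).1 hi.1).resolve_right hine
    rw [C.cval hjs hio] at hw2 ⊢
    exact u1 i ⟨hio, hi.2.1, fun i' hi' hlt => hi.2.2 i' (C.proc_mono hi') hlt⟩ w hw1 hw2

end Ctx

namespace Ctx

variable {α : Type u} [Fintype α] [DecidableEq α] (C : Ctx α)

theorem step_full {k : ℕ} {c : α → ℚ} {js : α} (hjs : C.R' js = k) (inv : C.Inv k c)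
    {cs : ℚ} (hcsZ : C.InZone k c js cs)
    (hcsR : ∀ i, C.proc k i → C.Rq (c i) < C.Rq cs)
    (hlfX : C.leaf' js → cs ∈ C.X)
    (hzn : ∀ j, ¬ C.proc (k + 1) j → C.gapFirst (k + 1) j → C.sameGap k j js →
      {x | x ∈ C.X ∧ C.InZone (k + 1) (Function.update c js cs) j x}.Infinite) :
    C.Inv (k + 1) (Function.update c js cs) := by
  constructor
  · -- pos
    intro i j hi hj
    by_cases hij : i = js
    · rw [hij]
      by_cases hjj : j = js
      · rw [hjj]
        exact iff_of_false (C.lt'_irrefl js) (lt_irrefl _)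
      · have hjo : C.proc k j := ((C.proc_succ_iff hjs).1 hj).resolve_right hjj
        rw [Function.update_self, C.cval hjs hjo]
        constructor
        · intro h; exact (hcsZ.2.2.1 j hjo).2 h
        · intro h
          rcases C.lt'_total (show js ≠ j from fun he => hjj he.symm) with h' | h'
          · exact h'
          · exact absurd ((hcsZ.2.2.1 j hjo).1 h') (lt_asymm h)
    · have hio : C.proc k i := ((C.proc_succ_iff hjs).1 hi).resolve_right hij
      by_cases hjj : j = js
      · rw [hjj]
        rw [Function.update_self, C.cval hjs hio]
        constructor
        · intro h; exact (hcsZ.2.2.1 i hio).1 h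
        · intro h
          rcases C.lt'_total hij with h' | h'
          · exact h'
          · exact absurd ((hcsZ.2.2.1 i hio).2 h') (lt_asymm h)
      · have hjo : C.proc k j := ((C.proc_succ_iff hjs).1 hj).resolve_right hjj
        rw [C.cval hjs hio, C.cval hjs hjo]
        exact inv.pos i j hio hjo
  · -- rk
    intro i j hi hj hR
    by_cases hjj : j = js
    · rw [hjj, Function.update_self]
      by_cases hij : i = js
      · rw [hij, hjj] at hR; exact absurd hR (lt_irrefl _)
      · have hio : C.proc k i := ((C.proc_succ_iff hjs).1 hi).resolve_right hij
        rw [C.cval hjs hio]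
        exact hcsR i hio
    · have hjo : C.proc k j := ((C.proc_succ_iff hjs).1 hj).resolve_right hjj
      by_cases hij : i = js
      · exfalso
        have h2 : C.R' j < k := hjo
        rw [hij, hjs] at hR
        omega
      · have hio : C.proc k i := ((C.proc_succ_iff hjs).1 hi).resolve_right hij
        rw [C.cval hjs hio, C.cval hjs hjo]
        exact inv.rk i j hio hjo hR
  · -- lf
    intro i hi hl
    by_cases hij : i = js
    · rw [hij, Function.update_self]
      refine hlfX ?_
      rwa [hij] at hl
    · have hio : C.proc k i := ((C.proc_succ_iff hjs).1 hi).resolve_right hij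
      rw [C.cval hjs hio]
      exact inv.lf i hio hl
  · -- bd
    intro i hi
    by_cases hij : i = js
    · rw [hij, Function.update_self]
      exact ⟨hcsZ.1, hcsZ.2.1⟩
    · have hio : C.proc k i := ((C.proc_succ_iff hjs).1 hi).resolve_right hij
      rw [C.cval hjs hio]
      exact inv.bd i hio
  · -- cln
    intro i j hi hj hlt hnb w hw1 hw2
    by_cases hij : i = js
    · by_cases hjj : j = js
      · rw [hij, hjj] at hlt; exact absurd hlt (lt_irrefl _)
      · have hjo : C.proc k j := ((C.proc_succ_iff hjs).1 hj).resolve_right hjj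
        rw [hij] at hlt hw1 ⊢
        rw [Function.update_self, C.cval hjs hjo] at hlt
        rw [Function.update_self] at hw1
        rw [C.cval hjs hjo] at hw2
        rw [Function.update_self, C.cval hjs hjo]
        have hUB : C.isUB k js j := by
          refine ⟨hjo, ?_, ?_⟩
          · rcases C.lt'_total (show js ≠ j from fun he => hjj he.symm) with h' | h'
            · exact h'
            · exact absurd ((hcsZ.2.2.1 j hjo).1 h') (lt_asymm hlt)
          · intro i' hi' hlt'
            by_contra hno
            have hne : i' ≠ j := fun he => hno (he ▸ le_refl' C.hle' j)
            have h3 : C.lt' i' j := by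
              rcases C.lt'_total hne with h' | h'
              · exact h'
              · exact absurd h'.1 hno
            have h4 : c i' < c j := (inv.pos i' j hi' hjo).1 h3
            have h5 : cs < c i' := (hcsZ.2.2.1 i' hi').2 hlt'
            refine hnb i' (C.proc_mono hi') ?_
            rw [hij, Function.update_self, C.cval hjs hi', C.cval hjs hjo]
            exact ⟨h5, h4⟩
        have hmin : min (C.Rq cs) (C.Rq (c j)) = C.Rq (c j) :=
          min_eq_right (le_of_lt (hcsR j hjo))
        rw [hmin]
        exact hcsZ.2.2.2.2 j hUB w hw1 hw2
    · have hio : C.proc k i := ((C.proc_succ_iff hjs).1 hi).resolve_right hij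
      by_cases hjj : j = js
      · rw [hjj] at hlt hw2 ⊢
        rw [C.cval hjs hio, Function.update_self] at hlt
        rw [Function.update_self] at hw2
        rw [C.cval hjs hio] at hw1
        rw [C.cval hjs hio, Function.update_self]
        have hLB : C.isLB k js i := by
          refine ⟨hio, ?_, ?_⟩
          · rcases C.lt'_total hij with h' | h'
            · exact h'
            · exact absurd ((hcsZ.2.2.1 i hio).2 h') (lt_asymm hlt)
          · intro i' hi' hlt'
            by_contra hno
            have hne : i ≠ i' := fun he => hno (he ▸ le_refl' C.hle' i')
            have h3 : C.lt' i i' := by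
              rcases C.lt'_total hne with h' | h'
              · exact h'
              · exact absurd h'.1 hno
            have h4 : c i < c i' := (inv.pos i i' hio hi').1 h3
            have h5 : c i' < cs := (hcsZ.2.2.1 i' hi').1 hlt'
            refine hnb i' (C.proc_mono hi') ?_
            rw [hjj, Function.update_self, C.cval hjs hi', C.cval hjs hio]
            exact ⟨h4, h5⟩
        have hmin : min (C.Rq (c i)) (C.Rq cs) = C.Rq (c i) :=
          min_eq_left (le_of_lt (hcsR i hio))
        rw [hmin]
        exact hcsZ.2.2.2.1 i hLB w hw1 hw2
      · have hjo : C.proc k j := ((C.proc_succ_iff hjs).1 hj).resolve_right hjj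
        rw [C.cval hjs hio] at hw1
        rw [C.cval hjs hjo] at hw2
        rw [C.cval hjs hio, C.cval hjs hjo]
        rw [C.cval hjs hio, C.cval hjs hjo] at hlt
        refine inv.cln i j hio hjo hlt ?_ w hw1 hw2
        intro l hl hbet
        refine hnb l (C.proc_mono hl) ?_
        rwa [C.cval hjs hio, C.cval hjs hjo, C.cval hjs hl]
  · -- zn
    intro j hj hgf
    by_cases hsg : C.sameGap k j js
    · exact hzn j hj hgf hsg
    · have hjk : ¬ C.proc k j := fun h => hj (C.proc_mono h)
      have hgf0 : C.gapFirst k j := C.gapFirst_of_succ hjs hj hgf hsg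
      refine (inv.zn j hjk hgf0).mono ?_
      rintro x ⟨hx1, hx2⟩
      exact ⟨hx1, C.zone_untouched hjs hcsZ hj hsg hx2⟩

end Ctx

namespace Ctx

variable {α : Type u} [Fintype α] [DecidableEq α] (C : Ctx α)

theorem zone_new_left {k : ℕ} {c : α → ℚ} {js j : α} (hjs : C.R' js = k)
    {cs p' x : ℚ}
    (hsg : C.sameGap k j js) (hside : C.lt' j js)
    (hpZ : C.InZone k c js p') (hcsZ : C.InZone k c js cs)
    (hclean : ∀ w, p' < w → w < cs → C.Rq cs < C.Rq w)
    (hx1 : p' < x) (hx2 : x < cs) :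
    C.InZone (k + 1) (Function.update c js cs) j x := by
  have hxZ : C.InZone k c js x := C.zone_convex hx1.le hx2.le hpZ hcsZ
  refine ⟨hxZ.1, hxZ.2.1, ?_, ?_, ?_⟩
  · intro i hi
    by_cases hij : i = js
    · rw [hij, Function.update_self]
      exact ⟨fun h => absurd h (C.lt'_asymm hside), fun _ => hx2⟩
    · have hio : C.proc k i := ((C.proc_succ_iff hjs).1 hi).resolve_right hij
      rw [C.cval hjs hio]
      constructor
      · intro h; exact (hxZ.2.2.1 i hio).1 ((hsg i hio).1 h)
      · intro h
        have h2 : ¬ C.lt' i j := C.lt'_asymm h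
        have h3 : ¬ C.lt' i js := fun hh => h2 ((hsg i hio).2 hh)
        rcases C.lt'_total (show js ≠ i from fun he => hij he.symm) with h' | h'
        · exact (hxZ.2.2.1 i hio).2 h'
        · exact absurd h' h3
  · intro i hi w hw1 hw2
    have hine : i ≠ js := by
      intro he; rw [he] at hi; exact C.lt'_asymm hside hi.2.1
    have hio : C.proc k i := ((C.proc_succ_iff hjs).1 hi.1).resolve_right hine
    rw [C.cval hjs hio] at hw1 ⊢
    refine hxZ.2.2.2.1 i ⟨hio, (hsg i hio).1 hi.2.1, ?_⟩ w hw1 hw2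
    intro i' hi' hlt'
    exact hi.2.2 i' (C.proc_mono hi') ((hsg i' hi').2 hlt')
  · intro i hi w hw1 hw2
    by_cases hij : i = js
    · rw [hij, Function.update_self]
      rw [hij, Function.update_self] at hw2
      exact hclean w (lt_trans hx1 hw1) hw2
    · exfalso
      have hio : C.proc k i := ((C.proc_succ_iff hjs).1 hi.1).resolve_right hij
      have h5 : C.le' i js := hi.2.2 js ((C.proc_succ_iff hjs).2 (Or.inr rfl)) hside
      have h6 : C.lt' i js := ⟨h5, hij⟩
      exact C.lt'_asymm hi.2.1 ((hsg i hio).2 h6)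

theorem zone_new_right {k : ℕ} {c : α → ℚ} {js j : α} (hjs : C.R' js = k)
    {cs q' x : ℚ}
    (hj : ¬ C.proc (k + 1) j)
    (hsg : C.sameGap k j js) (hside : C.lt' js j)
    (hcsZ : C.InZone k c js cs) (hqZ : C.InZone k c js q')
    (hclean : ∀ w, cs < w → w < q' → C.Rq cs < C.Rq w)
    (hx1 : cs < x) (hx2 : x < q') :
    C.InZone (k + 1) (Function.update c js cs) j x := by
  have hxZ : C.InZone k c js x := C.zone_convex hx1.le hx2.le hcsZ hqZ
  refine ⟨hxZ.1, hxZ.2.1, ?_, ?_, ?_⟩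
  · intro i hi
    by_cases hij : i = js
    · rw [hij, Function.update_self]
      exact ⟨fun _ => hx1, fun h => absurd h (C.lt'_asymm hside)⟩
    · have hio : C.proc k i := ((C.proc_succ_iff hjs).1 hi).resolve_right hij
      rw [C.cval hjs hio]
      constructor
      · intro h; exact (hxZ.2.2.1 i hio).1 ((hsg i hio).1 h)
      · intro h
        have h2 : ¬ C.lt' i j := C.lt'_asymm h
        have h3 : ¬ C.lt' i js := fun hh => h2 ((hsg i hio).2 hh)
        rcases C.lt'_total (show js ≠ i from fun he => hij he.symm) with h' | h'
        · exact (hxZ.2.2.1 i hio).2 h'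
        · exact absurd h' h3
  · intro i hi w hw1 hw2
    by_cases hij : i = js
    · rw [hij, Function.update_self]
      rw [hij, Function.update_self] at hw1
      exact hclean w hw1 (lt_trans hw2 hx2)
    · exfalso
      have hio : C.proc k i := ((C.proc_succ_iff hjs).1 hi.1).resolve_right hij
      have h5 : C.le' js i := hi.2.2 js ((C.proc_succ_iff hjs).2 (Or.inr rfl)) hside
      have h6 : C.lt' js i := ⟨h5, fun he => hij he.symm⟩
      exact C.lt'_asymm ((hsg i hio).1 hi.2.1) h6
  · intro i hi w hw1 hw2
    have hine : i ≠ js := by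
      intro he; rw [he] at hi; exact C.lt'_asymm hside hi.2.1
    have hio : C.proc k i := ((C.proc_succ_iff hjs).1 hi.1).resolve_right hine
    rw [C.cval hjs hio] at hw2 ⊢
    have h3 : C.lt' js i := by
      have h2 : ¬ C.lt' i j := C.lt'_asymm hi.2.1
      have h4 : ¬ C.lt' i js := fun hh => h2 ((hsg i hio).2 hh)
      rcases C.lt'_total (show js ≠ i from fun he => hine he.symm) with h' | h'
      · exact h'
      · exact absurd h' h4
    refine hxZ.2.2.2.2 i ⟨hio, h3, ?_⟩ w hw1 hw2
    intro i' hi' hlt'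
    refine hi.2.2 i' (C.proc_mono hi') ?_
    have hji' : j ≠ i' := fun he => hj (C.proc_mono (he ▸ hi'))
    have h5 : ¬ C.lt' i' js := C.lt'_asymm hlt'
    have h6 : ¬ C.lt' i' j := fun hh => h5 ((hsg i' hi').1 hh)
    exact (C.lt'_total hji').resolve_right (fun hh => h6 hh)

theorem step {k : ℕ} (hcard : k < Fintype.card α) (c : α → ℚ) (inv : C.Inv k c) :
    ∃ c', C.Inv (k + 1) c' := by
  classical
  obtain ⟨js, hjs⟩ := exists_rnk_eq C.hpre' hcard
  have hjs : C.R' js = k := hjs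
  have hZ := inv.zn js (C.not_proc_self hjs) (C.gapFirst_self hjs)
  set R := (Finset.univ.filter (fun i => C.proc k i)).sup (fun i => C.Rq (c i)) with hR
  have hRle : ∀ i, C.proc k i → C.Rq (c i) ≤ R := by
    intro i hi
    refine Finset.le_sup (f := fun i => C.Rq (c i)) ?_
    simp only [Finset.mem_filter, Finset.mem_univ, true_and]
    exact hi
  by_cases hlf : C.leaf' js
  · obtain ⟨cs, hcs, hcsR⟩ := pick_big C.hlin C.homega hZ R
    refine ⟨Function.update c js cs,
      C.step_full hjs inv hcs.2 (fun i hi => lt_of_le_of_lt (hRle i hi) hcsR)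
        (fun _ => hcs.1) ?_⟩
    intro j hj hgf hsg
    have hne : j ≠ js := fun he => hj (he ▸ ((C.proc_succ_iff hjs).2 (Or.inr rfl)))
    exact absurd hlf (C.leaf_no_future hjs hj hne hsg)
  · -- internal placement via the key lemma
    obtain ⟨s, hs⟩ := hZ.nonempty
    obtain ⟨t0, ht0⟩ := (hZ.diff (Set.finite_singleton s)).nonempty
    have hst0 : t0 ≠ s := by
      intro he
      exact ht0.2 (he ▸ rfl)
    obtain ⟨s', t', hs', ht', hstlt⟩ :
        ∃ s' t' : ℚ, (s' ∈ C.X ∧ C.InZone k c js s') ∧ (t' ∈ C.X ∧ C.InZone k c js t') ∧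
          s' < t' := by
      rcases lt_or_gt_of_ne hst0 with h | h
      · exact ⟨t0, s, ⟨ht0.1.1, ht0.1.2⟩, ⟨hs.1, hs.2⟩, h⟩
      · exact ⟨s, t0, ⟨hs.1, hs.2⟩, ⟨ht0.1.1, ht0.1.2⟩, h⟩
    obtain ⟨cs, p', q', hsp, hpc, hcq, hqt, hcsR, hcl, hcr, hinfl, hinfr⟩ :=
      key C.hlin C.homega C.hXd hs'.1 ht'.1 hstlt R
    have hpZ : C.InZone k c js p' :=
      C.zone_convex hsp (le_of_lt (lt_trans hpc (lt_of_lt_of_le hcq hqt))) hs'.2 ht'.2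
    have hqZ : C.InZone k c js q' :=
      C.zone_convex (le_of_lt (lt_trans (lt_of_le_of_lt hsp hpc) hcq)) hqt hs'.2 ht'.2
    have hcsZ : C.InZone k c js cs :=
      C.zone_convex (le_of_lt hpc) (le_of_lt hcq) hpZ hqZ
    refine ⟨Function.update c js cs,
      C.step_full hjs inv hcsZ (fun i hi => lt_of_le_of_lt (hRle i hi) hcsR)
        (fun hl => absurd hl hlf) ?_⟩
    intro j hj hgf hsg
    have hne : j ≠ js := fun he => hj (he ▸ ((C.proc_succ_iff hjs).2 (Or.inr rfl)))
    rcases C.lt'_total hne with hside | hside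
    · refine hinfl.mono ?_
      rintro x ⟨hxX, hx1, hx2⟩
      exact ⟨hxX, C.zone_new_left hjs hsg hside hpZ hcsZ hcl hx1 hx2⟩
    · refine hinfr.mono ?_
      rintro x ⟨hxX, hx1, hx2⟩
      exact ⟨hxX, C.zone_new_right hjs hj hsg hside hcsZ hqZ hcr hx1 hx2⟩

theorem build : ∀ k, k ≤ Fintype.card α → ∃ c, C.Inv k c := by
  intro k
  induction k with
  | zero =>
    intro _
    refine ⟨fun _ => 0, ⟨?_, ?_, ?_, ?_, ?_, ?_⟩⟩
    · intro i j hi hj; exact absurd hi (Nat.not_lt_zero _)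
    · intro i j hi hj; exact absurd hi (Nat.not_lt_zero _)
    · intro i hi; exact absurd hi (Nat.not_lt_zero _)
    · intro i hi; exact absurd hi (Nat.not_lt_zero _)
    · intro i j hi hj; exact absurd hi (Nat.not_lt_zero _)
    · intro j hj hgf
      refine (C.hXd C.g₀ C.hg₀ C.g₁ C.hg₁ C.hg).mono ?_
      rintro x ⟨hxX, hx1, hx2⟩
      refine ⟨hxX, hx1, hx2, ?_, ?_, ?_⟩
      · intro i hi; exact absurd hi (Nat.not_lt_zero _)
      · intro i hi; exact absurd hi.1 (Nat.not_lt_zero _)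
      · intro i hi; exact absurd hi.1 (Nat.not_lt_zero _)
  | succ k ih =>
    intro hk
    obtain ⟨c, inv⟩ := ih (Nat.le_of_succ_le hk)
    exact C.step (Nat.lt_of_succ_le hk) c inv

end Ctx

namespace Ctx

variable {α : Type u} [Fintype α] [DecidableEq α] (C : Ctx α)

theorem hleQ' : IsLinearOrder ℚ (· ≤ ·) := inferInstance

section Endgame

variable {c : α → ℚ}

theorem procAll (i : α) : C.proc (Fintype.card α) i := rnk_lt_card i

theorem e_inj (inv : C.Inv (Fintype.card α) c) : Function.Injective c := by
  intro i j h
  by_contra hne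
  rcases C.lt'_total hne with h' | h'
  · exact absurd h (ne_of_lt ((inv.pos i j (C.procAll i) (C.procAll j)).1 h'))
  · exact absurd h.symm (ne_of_lt ((inv.pos j i (C.procAll j) (C.procAll i)).1 h'))

theorem le_iff (inv : C.Inv (Fintype.card α) c) (i j : α) : C.le' i j ↔ c i ≤ c j := by
  by_cases hij : i = j
  · subst hij
    exact iff_of_true (le_refl' C.hle' i) le_rfl
  · constructor
    · intro h
      exact le_of_lt ((inv.pos i j (C.procAll i) (C.procAll j)).1 ⟨h, hij⟩)
    · intro h
      rcases C.lt'_total hij with h' | h'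
      · exact h'.1
      · exact absurd ((inv.pos j i (C.procAll j) (C.procAll i)).1 h')
          (not_lt.2 h)

theorem lt_iff (inv : C.Inv (Fintype.card α) c) (i j : α) : C.lt' i j ↔ c i < c j := by
  rw [inv.pos i j (C.procAll i) (C.procAll j)]

theorem btw_iff (inv : C.Inv (Fintype.card α) c) (i l j : α) : btw C.le' i l j ↔ btw (· ≤ ·) (c i) (c l) (c j) := by
  unfold btw
  rw [C.le_iff inv i l, C.le_iff inv l j, C.le_iff inv j l, C.le_iff inv l i]

theorem rk_lt_iff (inv : C.Inv (Fintype.card α) c) (i j : α) : C.R' i < C.R' j ↔ C.Rq (c i) < C.Rq (c j) := by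
  constructor
  · exact inv.rk i j (C.procAll i) (C.procAll j)
  · intro h
    rcases Nat.lt_trichotomy (C.R' i) (C.R' j) with h' | h' | h'
    · exact h'
    · rw [C.R'_inj h'] at h; exact absurd h (lt_irrefl _)
    · exact absurd (inv.rk j i (C.procAll j) (C.procAll i) h') (lt_asymm h)

theorem rk_le_iff (inv : C.Inv (Fintype.card α) c) (i j : α) : C.R' i ≤ C.R' j ↔ C.Rq (c i) ≤ C.Rq (c j) := by
  by_cases hij : i = j
  · subst hij; exact iff_of_true le_rfl le_rfl
  · constructor
    · intro h
      have h2 : C.R' i < C.R' j := lt_of_le_of_ne h (fun he => hij (C.R'_inj he))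
      exact le_of_lt ((C.rk_lt_iff inv i j).1 h2)
    · intro h
      have h2 : C.Rq (c i) < C.Rq (c j) :=
        lt_of_le_of_ne h (fun he => hij (C.e_inj inv (C.Rq_inj he)))
      exact le_of_lt ((C.rk_lt_iff inv i j).2 h2)

theorem stranger_gap (inv : C.Inv (Fintype.card α) c) {w : ℚ} {i j : α} (hw : btw (· ≤ ·) (c i) w (c j))
    (hnw : ∀ l : α, c l ≠ w) :
    ∃ a b : α, btw (· ≤ ·) (c i) (c a) (c j) ∧ btw (· ≤ ·) (c i) (c b) (c j) ∧
      min (C.Rq (c a)) (C.Rq (c b)) < C.Rq w := by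
  classical
  have main : ∀ i j : α, c i ≤ w → w ≤ c j →
      ∃ a b : α, (c i ≤ c a ∧ c a ≤ c j) ∧ (c i ≤ c b ∧ c b ≤ c j) ∧
        min (C.Rq (c a)) (C.Rq (c b)) < C.Rq w := by
    intro i j h1 h2
    have h1' : c i < w := lt_of_le_of_ne h1 (hnw i)
    have h2' : w < c j := lt_of_le_of_ne h2 (fun he => hnw j he.symm)
    obtain ⟨a, haA, hamax⟩ := Finset.exists_max_image
      (Finset.univ.filter (fun l => c l < w)) (fun l => c l)
      ⟨i, Finset.mem_filter.2 ⟨Finset.mem_univ _, h1'⟩⟩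
    obtain ⟨b, hbB, hbmin⟩ := Finset.exists_min_image
      (Finset.univ.filter (fun l => w < c l)) (fun l => c l)
      ⟨j, Finset.mem_filter.2 ⟨Finset.mem_univ _, h2'⟩⟩
    have haw : c a < w := (Finset.mem_filter.1 haA).2
    have hwb : w < c b := (Finset.mem_filter.1 hbB).2
    have hia : c i ≤ c a := hamax i (Finset.mem_filter.2 ⟨Finset.mem_univ _, h1'⟩)
    have hbj : c b ≤ c j := hbmin j (Finset.mem_filter.2 ⟨Finset.mem_univ _, h2'⟩)
    refine ⟨a, b, ⟨hia, le_of_lt (lt_of_lt_of_le haw h2)⟩,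
      ⟨le_of_lt (lt_of_le_of_lt h1 hwb), hbj⟩, ?_⟩
    refine inv.cln a b (C.procAll a) (C.procAll b) (lt_trans haw hwb) ?_ w haw hwb
    intro l _ hbet
    rcases lt_trichotomy (c l) w with h' | h' | h'
    · exact absurd (hamax l (Finset.mem_filter.2 ⟨Finset.mem_univ _, h'⟩))
        (not_le.2 hbet.1)
    · exact hnw l h'
    · exact absurd (hbmin l (Finset.mem_filter.2 ⟨Finset.mem_univ _, h'⟩))
        (not_le.2 hbet.2)
  rcases hw with ⟨h1, h2⟩ | ⟨h1, h2⟩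
  · obtain ⟨a, b, ha, hb, hm⟩ := main i j h1 h2
    exact ⟨a, b, Or.inl ha, Or.inl hb, hm⟩
  · obtain ⟨a, b, ha, hb, hm⟩ := main j i h1 h2
    exact ⟨a, b, Or.inr ⟨ha.1, ha.2⟩, Or.inr ⟨hb.1, hb.2⟩, hm⟩

theorem hull_min_transfer (inv : C.Inv (Fintype.card α) c) {i j m : α} (hmin : ∀ l, btw C.le' i l j → C.R' m ≤ C.R' l) :
    ∀ w, btw (· ≤ ·) (c i) w (c j) → C.Rq (c m) ≤ C.Rq w := by
  intro w hw
  by_cases hrange : ∃ l : α, c l = w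
  · obtain ⟨l, rfl⟩ := hrange
    exact (C.rk_le_iff inv m l).1 (hmin l ((C.btw_iff inv i l j).2 hw))
  · push_neg at hrange
    obtain ⟨a, b, ha, hb, hm⟩ := C.stranger_gap inv hw hrange
    have h1 : C.Rq (c m) ≤ C.Rq (c a) :=
      (C.rk_le_iff inv m a).1 (hmin a ((C.btw_iff inv i a j).2 ha))
    have h2 : C.Rq (c m) ≤ C.Rq (c b) :=
      (C.rk_le_iff inv m b).1 (hmin b ((C.btw_iff inv i b j).2 hb))
    exact le_of_lt (lt_of_le_of_lt (le_min h1 h2) hm)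

theorem tr_transfer (inv : C.Inv (Fintype.card α) c) (i j : α) :
    treeRel C.le' C.pre' i j ↔ treeRel (· ≤ ·) C.pre (c i) (c j) := by
  rw [tr_iff_min C.hle' C.hpre' C.hfin' i j,
    tr_iff_min hleQ' C.hlin C.homega (c i) (c j)]
  constructor
  · intro h w hw
    exact C.hull_min_transfer inv (fun l hl => h l hl) w hw
  · intro h l hl
    exact (C.rk_le_iff inv i l).2 (h (c l) ((C.btw_iff inv i l j).1 hl))

theorem meet_transfer (inv : C.Inv (Fintype.card α) c) {i j m : α} (hm : btw C.le' i m j)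
    (hmin : ∀ l, btw C.le' i l j → C.R' m ≤ C.R' l) :
    isMeet (treeRel (· ≤ ·) C.pre) (c i) (c j) (c m) :=
  hullmin_isMeet hleQ' C.hlin C.homega ((C.btw_iff inv i m j).1 hm)
    (C.hull_min_transfer inv hmin)

theorem range_meetClosed (inv : C.Inv (Fintype.card α) c) :
    MeetClosed (treeRel (· ≤ ·) C.pre) (Set.range c) := by
  rintro a ⟨i, rfl⟩ b ⟨j, rfl⟩ m hm
  obtain ⟨m', hm', hmin'⟩ := exists_rnk_min (pre := C.pre')
    (s := {l | btw C.le' i l j}) ⟨i, btw_left C.hle' i j⟩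
  have h1 := C.meet_transfer inv hm' hmin'
  have h2 : m = c m' := isMeet_unique hleQ' C.hlin C.homega hm h1
  exact ⟨m', h2.symm⟩

theorem mem_meet_closure (inv : C.Inv (Fintype.card α) c) (i : α) (Cs : Set ℚ)
    (hS : ∀ l, C.leaf' l → c l ∈ Cs)
    (hMC : MeetClosed (treeRel (· ≤ ·) C.pre) Cs) : c i ∈ Cs := by
  by_cases hlf : C.leaf' i
  · exact hS i hlf
  · obtain ⟨p, q, hp, hq, hbtw, _, _, hmin⟩ :=
      internal_hullmin_leaves C.hle' C.hpre' C.htree' C.hleaf2 hlf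
    refine hMC (c p) (hS p hp) (c q) (hS q hq) (c i) ?_
    exact C.meet_transfer inv hbtw (fun l hl => hmin l hl)

end Endgame

end Ctx

end Shapes

theorem every_copy_realises_every_shape (pre : ℚ → ℚ → Prop)
    (hlin : IsLinearOrder ℚ pre) (homega : ∀ x : ℚ, {y : ℚ | pre y x}.Finite)
    (X : Set ℚ) (hX : Nonempty (↥X ≃o ℚ)) (n : ℕ) (hn : 0 < n)
    (le' pre' : Fin (2*n-1) → Fin (2*n-1) → Prop)
    (hcompat : CompatPair le' pre') (hpre' : IsLinearOrder (Fin (2*n-1)) pre') :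
    ∃ S : Finset ℚ, ↑S ⊆ X ∧ S.card = n ∧
      ∃ e : Fin (2*n-1) → ℚ, Function.Injective e ∧
        Set.range e = ⋂₀ {C : Set ℚ | ↑S ⊆ C ∧ MeetClosed (treeRel (· ≤ ·) pre) C} ∧
        (∀ i j, le' i j ↔ e i ≤ e j) ∧
        (∀ i j, pre' i j ↔ pre (e i) (e j)) ∧
        (∀ a ∈ Set.range e,
          (a ∈ S ↔ ∀ b ∈ Set.range e, treeRel (· ≤ ·) pre a b → b = a)) ∧
        e '' {i | isLeaf (treeRel le' pre') i} = ↑S := by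
  classical
  have hXd := Shapes.X_dense hX
  obtain ⟨f⟩ := hX
  have hfne : ((f.symm 0 : ↥X) : ℚ) ≠ ((f.symm 1 : ↥X) : ℚ) := by
    intro h
    have h2 : f.symm 0 = f.symm 1 := Subtype.coe_injective h
    have h3 : (0 : ℚ) = 1 := by
      have := congrArg f h2
      simpa using this
    norm_num at h3
  obtain ⟨g₀, g₁, hg₀, hg₁, hglt⟩ : ∃ g₀ g₁ : ℚ, g₀ ∈ X ∧ g₁ ∈ X ∧ g₀ < g₁ := by
    rcases lt_or_gt_of_ne hfne with h | h
    · exact ⟨_, _, (f.symm 0).2, (f.symm 1).2, h⟩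
    · exact ⟨_, _, (f.symm 1).2, (f.symm 0).2, h⟩
  let C : Shapes.Ctx (Fin (2*n-1)) :=
    { pre := pre, hlin := hlin, homega := homega, X := X, hXd := hXd,
      le' := le', pre' := pre', hle' := hcompat.1, hpre' := hpre',
      htree' := hcompat.2.2.1, hleaf2 := hcompat.2.2.2,
      g₀ := g₀, g₁ := g₁, hg₀ := hg₀, hg₁ := hg₁, hg := hglt }
  obtain ⟨c, inv⟩ := C.build (Fintype.card (Fin (2*n-1))) le_rfl
  have hinj : Function.Injective c := C.e_inj inv
  set S : Finset ℚ :=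
    (Finset.univ.filter (fun i => isLeaf (treeRel le' pre') i)).image c with hSdef
  have hmemS : ∀ i : Fin (2*n-1), c i ∈ S ↔ isLeaf (treeRel le' pre') i := by
    intro i
    rw [hSdef]
    constructor
    · intro h
      obtain ⟨l, hl, heq⟩ := Finset.mem_image.1 h
      rw [← hinj heq]
      exact (Finset.mem_filter.1 hl).2
    · intro h
      exact Finset.mem_image.2 ⟨i, Finset.mem_filter.2 ⟨Finset.mem_univ _, h⟩, rfl⟩
  refine ⟨S, ?_, ?_, c, hinj, ?_, ?_, ?_, ?_, ?_⟩
  · -- S ⊆ X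
    intro x hx
    obtain ⟨i, hi, rfl⟩ := Finset.mem_image.1 hx
    exact inv.lf i (C.procAll i) (Finset.mem_filter.1 hi).2
  · -- card
    have hcount := Shapes.leaf_count (le := le') C.hpre' C.hleaf2 C.htree'.2.1
      (fun a => (C.htree'.2.2 a).1)
      (fun x y h1 h2 => C.htree'.1.toAntisymm.antisymm x y h1 h2)
    rw [hSdef, Finset.card_image_of_injective _ hinj]
    rw [Fintype.card_fin] at hcount
    have hcount' : (Finset.univ.filter (fun i => isLeaf (treeRel le' pre') i)).card * 2
        = (2 * n - 1) + 1 := hcount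
    omega
  · -- range = meet closure
    apply Set.Subset.antisymm
    · rintro x ⟨i, rfl⟩
      refine Set.mem_sInter.2 ?_
      rintro Cs ⟨hCs1, hCs2⟩
      refine C.mem_meet_closure inv i Cs ?_ hCs2
      intro l hl
      exact hCs1 ((hmemS l).2 hl)
    · intro x hx
      refine Set.mem_sInter.1 hx (Set.range c) ⟨?_, C.range_meetClosed inv⟩
      intro y hy
      obtain ⟨l, _, rfl⟩ := Finset.mem_image.1 hy
      exact ⟨l, rfl⟩
  · -- le'
    exact fun i j => C.le_iff inv i j
  · -- pre'
    intro i j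
    show C.pre' i j ↔ C.pre (c i) (c j)
    rw [Shapes.pre_iff_rnk C.hpre' C.hfin' i j, Shapes.pre_iff_rnk C.hlin C.homega (c i) (c j)]
    exact C.rk_le_iff inv i j
  · -- leaves characterisation
    rintro a ⟨i, rfl⟩
    rw [hmemS i]
    constructor
    · rintro hl b ⟨j, rfl⟩ htr
      exact congrArg c (hl j ((C.tr_transfer inv i j).2 htr))
    · intro h j htr
      exact hinj (h (c j) ⟨j, rfl⟩ ((C.tr_transfer inv i j).1 htr))
  · -- image of leaves
    ext x
    constructor
    · rintro ⟨i, hi, rfl⟩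
      exact (hmemS i).2 hi
    · intro hx
      obtain ⟨i, hi, rfl⟩ := Finset.mem_image.1 hx
      exact ⟨i, (Finset.mem_filter.1 hi).2, rfl⟩
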